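/- Let k be a field of characteristic zero, a, b ∈ k[x] with a ≠ 0, and λ₁, λ₂ ∈ k. If P₁, P₂ ∈ k[x] satisfy P₁' = a·P₁ + λ₁·b and P₂' = a·P₂ + λ₂·b, then λ₁·P₂ = λ₂·P₁ (equivalently −λ₂·P₁ + λ₁·P₂ = 0). -/

import Mathlib

/-- If `P₁` and `P₂` are polynomial solutions of `h' = a·h + λ₁·b` and
`h' = a·h + λ₂·b` respectively (with `a ≠ 0`), then `λ₁·P₂ = λ₂·P₁`. -/
theorem ode_solutions_proportional {k : Type*} [Field k] [CharZero k]
    (a b : Polynomial k) (ha : a ≠ 0) (lam₁ lam₂ : k) (P₁ P₂ : Polynomial k)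
    (h₁ : Polynomial.derivative P₁ = a * P₁ + lam₁ • b)
    (h₂ : Polynomial.derivative P₂ = a * P₂ + lam₂ • b) :
    lam₁ • P₂ = lam₂ • P₁ := by
  set Q : Polynomial k := lam₁ • P₂ - lam₂ • P₁ with hQdef
  have hQ : Polynomial.derivative Q = a * Q := by
    simp only [hQdef, map_sub, map_smul, h₁, h₂]
    simp only [smul_add, smul_smul, mul_comm lam₁ lam₂]
    ring_nf
    simp [Polynomial.smul_eq_C_mul]
    ring
  have hQ0 : Q = 0 := by
    by_contra h
    have hdlt : (Polynomial.derivative Q).degree < Q.degree :=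
      Polynomial.degree_derivative_lt h
    have : Q.degree ≤ (a * Q).degree := by
      rw [Polynomial.degree_mul]
      have : (0 : WithBot ℕ) ≤ a.degree := Polynomial.zero_le_degree_iff.mpr ha
      calc Q.degree = 0 + Q.degree := by rw [zero_add]
        _ ≤ a.degree + Q.degree := add_le_add_left this _
    rw [← hQ] at this
    exact absurd hdlt (not_lt.mpr this)
  have := sub_eq_zero.mp hQ0
  exact this
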